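/- Let f_1, …, f_m : ℝⁿ → ℝ ∪ {+∞} be lower semicontinuous functions, each with unbounded domain and with dom(min{f_1,…,f_m}) unbounded. Then ∂(min{f_1, …, f_m})(∞) ⊆ ∂f_1(∞) ∪ … ∪ ∂f_m(∞). -/
import Mathlib


open Filter Topology Set Pointwise RealInnerProductSpace

noncomputable section

variable {E : Type*} [NormedAddCommGroup E] [InnerProductSpace ℝ E]

/-- The Fréchet (regular) normal cone to `Ω` at `x`:
`{v | limsup_{y→x, y∈Ω} ⟪v, y-x⟫/‖y-x‖ ≤ 0}`, empty if `x ∉ Ω`. -/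
def FrechetNormalCone (Ω : Set E) (x : E) : Set E :=
  {v | x ∈ Ω ∧ ∀ ε > (0:ℝ), ∀ᶠ y in 𝓝[Ω] x, ⟪v, y - x⟫ ≤ ε * ‖y - x‖}

/-- The limiting (Mordukhovich) normal cone to `Ω` at `x`. -/
def LimitingNormalCone (Ω : Set E) (x : E) : Set E :=
  {v | ∃ xs vs : ℕ → E, (∀ k, vs k ∈ FrechetNormalCone Ω (xs k)) ∧
    Tendsto xs atTop (𝓝 x) ∧ Tendsto vs atTop (𝓝 v)}

/-- The normal cone to an unbounded set `Ω` at infinity. -/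
def NormalConeAtInfty (Ω : Set E) : Set E :=
  {v | ∃ xs vs : ℕ → E, (∀ k, vs k ∈ FrechetNormalCone Ω (xs k)) ∧
    Tendsto (fun k => ‖xs k‖) atTop atTop ∧ Tendsto vs atTop (𝓝 v)}

/-- The epigraph of `f : E → ℝ ∪ {+∞}` as a subset of the (ℓ²-)product `E × ℝ`. -/
def epiSet (f : E → EReal) : Set (WithLp 2 (E × ℝ)) :=
  {p | f (WithLp.equiv 2 (E × ℝ) p).1 ≤ ((WithLp.equiv 2 (E × ℝ) p).2 : EReal)}

/-- The point `(x, t)` of the (ℓ²-)product `E × ℝ`. -/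
def mkP (x : E) (t : ℝ) : WithLp 2 (E × ℝ) := (WithLp.equiv 2 (E × ℝ)).symm (x, t)

/-- `𝒩(f)`: limits of limiting normals to `epi f` at points `(x_k, f(x_k))` with `‖x_k‖ → ∞`. -/
def NclAtInfty (f : E → EReal) : Set (E × ℝ) :=
  {q | ∃ (xs : ℕ → E) (ws : ℕ → WithLp 2 (E × ℝ)),
    (∀ k, f (xs k) ≠ ⊤) ∧
    Tendsto (fun k => ‖xs k‖) atTop atTop ∧
    (∀ k, ws k ∈ LimitingNormalCone (epiSet f) (mkP (xs k) (f (xs k)).toReal)) ∧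
    Tendsto (fun k => WithLp.equiv 2 (E × ℝ) (ws k)) atTop (𝓝 q)}

/-- The limiting subdifferential of `f` at infinity: `∂f(∞) = {u | (u,-1) ∈ 𝒩(f)}`. -/
def subInfty (f : E → EReal) : Set E := {u | (u, (-1 : ℝ)) ∈ NclAtInfty f}

/-- The singular subdifferential of `f` at infinity: `∂^∞f(∞) = {u | (u,0) ∈ 𝒩(f)}`. -/
def singSubInfty (f : E → EReal) : Set E := {u | (u, (0 : ℝ)) ∈ NclAtInfty f}

/-- The singular subdifferential of `f` at a point `x ∈ dom f`:
`∂^∞f(x) = {v | (v,0) ∈ N((x,f(x)); epi f)}`, empty if `x ∉ dom f`. -/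
def singSub (f : E → EReal) (x : E) : Set E :=
  {v | f x ≠ ⊤ ∧ mkP v 0 ∈ LimitingNormalCone (epiSet f) (mkP x (f x).toReal)}

/-- `λ∘∂f(∞)`: equals `λ • ∂f(∞)` for `λ ≠ 0` and `∂^∞f(∞)` for `λ = 0`. -/
def lamCirc (f : E → EReal) (lam : ℝ) : Set E :=
  if lam = 0 then singSubInfty f else lam • subInfty f

/-- `f` is Lipschitz at infinity. -/
def LipschitzAtInfty (f : E → ℝ) : Prop :=
  ∃ L > (0:ℝ), ∃ R > (0:ℝ), ∀ x x' : E, R < ‖x‖ → R < ‖x'‖ → |f x - f x'| ≤ L * ‖x - x'‖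

end

section Aux

variable {E : Type*} [NormedAddCommGroup E] [InnerProductSpace ℝ E]

lemma frechet_anti {Ω₁ Ω₂ : Set E} (h : Ω₁ ⊆ Ω₂) {x : E} (hx : x ∈ Ω₁) :
    FrechetNormalCone Ω₂ x ⊆ FrechetNormalCone Ω₁ x := by
  rintro v ⟨-, hv⟩
  exact ⟨hx, fun ε hε => (hv ε hε).filter_mono (nhdsWithin_mono x h)⟩

lemma isClosed_epiSet {f : E → EReal} (hf : LowerSemicontinuous f) :
    IsClosed (epiSet f) := by
  have hS : IsClosed {q : E × ℝ | f q.1 ≤ (q.2 : EReal)} := by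
    rw [← isOpen_compl_iff, isOpen_iff_mem_nhds]
    intro q hq
    simp only [Set.mem_compl_iff, Set.mem_setOf_eq, not_le] at hq
    obtain ⟨r, hr1, hr2⟩ := EReal.exists_between_coe_real hq
    have h1 : ∀ᶠ p : E × ℝ in 𝓝 q, (r : EReal) < f p.1 :=
      (continuous_fst.tendsto q).eventually (hf q.1 r hr2)
    have h2 : ∀ᶠ p : E × ℝ in 𝓝 q, p.2 < r :=
      (continuous_snd.tendsto q).eventually_lt_const (by exact_mod_cast hr1)
    filter_upwards [h1, h2] with p hp1 hp2
    simp only [Set.mem_compl_iff, Set.mem_setOf_eq, not_le]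
    exact lt_trans (by exact_mod_cast hp2) hp1
  have heq : epiSet f =
      (fun w : WithLp 2 (E × ℝ) => (WithLp.equiv 2 (E × ℝ)) w) ⁻¹'
        {q : E × ℝ | f q.1 ≤ (q.2 : EReal)} := rfl
  rw [heq]
  exact hS.preimage (WithLp.prodContinuousLinearEquiv 2 ℝ E ℝ).continuous

lemma limiting_min_aux {m : ℕ} (hm : 1 ≤ m) (f : Fin m → E → EReal)
    (hlsc : ∀ i, LowerSemicontinuous (f i)) {p w : WithLp 2 (E × ℝ)}
    (hw : w ∈ LimitingNormalCone (epiSet (fun x => ⨅ i, f i x)) p) :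
    ∃ j, w ∈ LimitingNormalCone (epiSet (f j)) p ∧ p ∈ epiSet (f j) := by
  haveI : Nonempty (Fin m) := ⟨⟨0, hm⟩⟩
  obtain ⟨qs, vs, hmem, hq, hv⟩ := hw
  have hsel : ∀ l, ∃ i, qs l ∈ epiSet (f i) := by
    intro l
    have h1 : qs l ∈ epiSet (fun x => ⨅ i, f i x) := (hmem l).1
    obtain ⟨i₀, hi₀⟩ := Finite.exists_min
      (fun i => f i ((WithLp.equiv 2 (E × ℝ)) (qs l)).1)
    exact ⟨i₀, le_trans (le_iInf hi₀) h1⟩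
  choose is his using hsel
  obtain ⟨j, hj⟩ := Finite.exists_infinite_fiber is
  have hS : (setOf fun l => is l = j).Infinite := by
    rw [← Set.infinite_coe_iff] at *
    exact hj
  set φ : ℕ → ℕ := Nat.nth (fun l => is l = j) with hφdef
  have hφ : StrictMono φ := Nat.nth_strictMono hS
  have hφmem : ∀ l, is (φ l) = j := fun l => Nat.nth_mem_of_infinite hS l
  have hsub : epiSet (f j) ⊆ epiSet (fun x => ⨅ i, f i x) := by
    intro q hq'
    simp only [epiSet, Set.mem_setOf_eq] at hq' ⊢
    exact le_trans (iInf_le _ j) hq'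
  have hmem' : ∀ l, qs (φ l) ∈ epiSet (f j) := fun l => (hφmem l) ▸ his (φ l)
  refine ⟨j, ⟨fun l => qs (φ l), fun l => vs (φ l),
      fun l => frechet_anti hsub (hmem' l) (hmem (φ l)),
      hq.comp hφ.tendsto_atTop, hv.comp hφ.tendsto_atTop⟩, ?_⟩
  exact (isClosed_epiSet (hlsc j)).mem_of_tendsto (hq.comp hφ.tendsto_atTop)
    (Filter.Eventually.of_forall hmem')

end Aux

/-- Proposition 2.16: minimum rule for the limiting subdifferential
at infinity. -/
theorem min_rule_at_infinity {n m : ℕ} (hm : 1 ≤ m)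
    (f : Fin m → EuclideanSpace ℝ (Fin n) → EReal)
    (hlsc : ∀ i, LowerSemicontinuous (f i)) (hbot : ∀ i x, f i x ≠ ⊥)
    (hdom : ∀ i, ¬ Bornology.IsBounded {x | f i x ≠ ⊤})
    (hdommin : ¬ Bornology.IsBounded {x | (⨅ i, f i x) ≠ ⊤}) :
    subInfty (fun x => ⨅ i, f i x) ⊆ ⋃ i, subInfty (f i) := by
  haveI : Nonempty (Fin m) := ⟨⟨0, hm⟩⟩
  intro u hu
  obtain ⟨xs, ws, htop, hxs, hws, hten⟩ := hu
  have key : ∀ k, ∃ j : Fin m, f j (xs k) = (⨅ i, f i (xs k)) ∧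
      ws k ∈ LimitingNormalCone (epiSet (f j))
        (mkP (xs k) ((⨅ i, f i (xs k)) : EReal).toReal) := by
    intro k
    obtain ⟨j, hjw, hjp⟩ := limiting_min_aux hm f hlsc (hws k)
    refine ⟨j, ?_, hjw⟩
    have hne_bot : (⨅ i, f i (xs k)) ≠ ⊥ := by
      obtain ⟨i₀, hi₀⟩ := Finite.exists_min (fun i => f i (xs k))
      have heq : (⨅ i, f i (xs k)) = f i₀ (xs k) :=
        le_antisymm (iInf_le _ i₀) (le_iInf hi₀)
      rw [heq]; exact hbot i₀ (xs k)
    have hco : (((⨅ i, f i (xs k)) : EReal).toReal : EReal) = (⨅ i, f i (xs k)) :=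
      EReal.coe_toReal (htop k) hne_bot
    have hjp' : f j (xs k) ≤ (((⨅ i, f i (xs k)) : EReal).toReal : EReal) := by
      simpa [epiSet, mkP, Set.mem_setOf_eq] using hjp
    exact le_antisymm (hco ▸ hjp') (iInf_le _ j)
  choose j hj1 hj2 using key
  obtain ⟨i, hi⟩ := Finite.exists_infinite_fiber j
  have hS : (setOf fun k => j k = i).Infinite := by
    rw [← Set.infinite_coe_iff] at *
    exact hi
  set φ : ℕ → ℕ := Nat.nth (fun k => j k = i) with hφdef
  have hφ : StrictMono φ := Nat.nth_strictMono hS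
  have hφmem : ∀ k, j (φ k) = i := fun k => Nat.nth_mem_of_infinite hS k
  refine Set.mem_iUnion.mpr ⟨i, fun k => xs (φ k), fun k => ws (φ k), ?_, ?_, ?_, ?_⟩
  · intro k
    have h1 := hj1 (φ k); rw [hφmem k] at h1
    rw [h1]; exact htop (φ k)
  · exact hxs.comp hφ.tendsto_atTop
  · intro k
    have h1 := hj1 (φ k); rw [hφmem k] at h1
    have h2 := hj2 (φ k); rw [hφmem k, ← h1] at h2
    exact h2
  · exact hten.comp hφ.tendsto_atTop
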